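/- Let ξ_n > 0 and η_n > 0 be sequences with ξ_n η_n → 0 and n^{1/2} η_n → e, where 0 ≤ e < ∞, let k_n be integers with 1 ≤ k_n < n, and suppose θ_n ∈ ℝ and σ_n ∈ (0,∞) satisfy n^{1/2} θ_n/(σ_n ξ_n) → ν in the extended real line. Then: (a1) if n − k_n is eventually constant equal to m, then p̃_n(θ_n, σ_n) → ∫_0^∞ (Φ(−ν + s e) − Φ(−ν − s e)) ρ_m(s) ds; (a2) if n − k_n → ∞, then p̃_n(θ_n, σ_n) → Φ(−ν + e) − Φ(−ν − e). -/

import Mathlib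

open MeasureTheory ProbabilityTheory Filter Set

/-- Standard normal cdf. -/
noncomputable def Phi (x : ℝ) : ℝ :=
  ∫ t in Iic x, (Real.sqrt (2 * Real.pi))⁻¹ * Real.exp (-t ^ 2 / 2)

/-- Standard normal pdf. -/
noncomputable def stdPhi (t : ℝ) : ℝ :=
  (Real.sqrt (2 * Real.pi))⁻¹ * Real.exp (-t ^ 2 / 2)

/-- Extension of `Phi` to the extended reals, with `PhiE ⊤ = 1` and `PhiE ⊥ = 0`. -/
noncomputable def PhiE (z : EReal) : ℝ :=
  if z = ⊤ then 1 else if z = ⊥ then 0 else Phi z.toReal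

/-- Density of `m^{-1/2}` times the square root of a chi-square with `m` degrees of freedom. -/
noncomputable def rho (m : ℕ) (s : ℝ) : ℝ :=
  if 0 < s then
    (2 : ℝ) ^ ((1 : ℝ) - (m : ℝ) / 2) * (Real.Gamma ((m : ℝ) / 2))⁻¹ * Real.sqrt m *
      ((m : ℝ) * s ^ 2) ^ (((m : ℝ) - 1) / 2) * Real.exp (-(m : ℝ) * s ^ 2 / 2)
  else 0

/-- Unknown-variance variable deletion probability with `m` degrees of freedom. -/
noncomputable def ptdel (n m : ℕ) (ξ η θ σ : ℝ) : ℝ :=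
  ∫ s in Ioi (0 : ℝ),
    (Phi (Real.sqrt n * (-θ / (σ * ξ) + s * η)) -
      Phi (Real.sqrt n * (-θ / (σ * ξ) - s * η))) * rho m s

notation "C0" => (Real.sqrt (2 * Real.pi))⁻¹

lemma C0_pos : (0:ℝ) < C0 := by
  have : (0:ℝ) < Real.sqrt (2 * Real.pi) := Real.sqrt_pos.2 (by positivity)
  positivity

lemma stdPhi_eq (t : ℝ) : stdPhi t = C0 * Real.exp (-(1/2) * t ^ 2) := by
  unfold stdPhi; ring_nf

lemma stdPhi_nonneg (t : ℝ) : 0 ≤ stdPhi t := by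
  rw [stdPhi_eq]; positivity

lemma stdPhi_le (t : ℝ) : stdPhi t ≤ C0 := by
  rw [stdPhi_eq]
  have h1 : Real.exp (-(1/2) * t ^ 2) ≤ 1 := by
    rw [Real.exp_le_one_iff]; nlinarith [sq_nonneg t]
  nlinarith [C0_pos]

lemma integrable_stdPhi : Integrable stdPhi := by
  have := (integrable_exp_neg_mul_sq (by norm_num : (0:ℝ) < 1/2)).const_mul C0
  exact this.congr (Eventually.of_forall (fun t => (stdPhi_eq t).symm))

lemma integral_stdPhi : ∫ t, stdPhi t = 1 := by
  have h := integral_gaussian (1/2 : ℝ)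
  have h2 : Real.sqrt (Real.pi / (1/2)) = Real.sqrt (2 * Real.pi) := by
    norm_num; ring_nf
  simp only [stdPhi_eq, MeasureTheory.integral_const_mul, h, h2]
  rw [inv_mul_cancel₀ (by positivity : Real.sqrt (2*Real.pi) ≠ 0)]

lemma Phi_eq (x : ℝ) : Phi x = ∫ t in Iic x, stdPhi t := rfl

lemma Phi_mono : Monotone Phi := by
  intro a b hab
  rw [Phi_eq, Phi_eq]
  exact setIntegral_mono_set integrable_stdPhi.integrableOn
    (Eventually.of_forall stdPhi_nonneg) (HasSubset.Subset.eventuallyLE (Iic_subset_Iic.2 hab))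

lemma Phi_nonneg (x : ℝ) : 0 ≤ Phi x := by
  rw [Phi_eq]
  exact setIntegral_nonneg measurableSet_Iic (fun t _ => stdPhi_nonneg t)

lemma Phi_le_one (x : ℝ) : Phi x ≤ 1 := by
  rw [Phi_eq, ← integral_stdPhi]
  exact setIntegral_le_integral integrable_stdPhi (Eventually.of_forall stdPhi_nonneg)

lemma Phi_sub_Phi (a b : ℝ) : Phi b - Phi a = ∫ t in a..b, stdPhi t := by
  rw [Phi_eq, Phi_eq]
  exact intervalIntegral.integral_Iic_sub_Iic integrable_stdPhi.integrableOn
    integrable_stdPhi.integrableOn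

lemma Phi_lipschitz (a b : ℝ) : |Phi b - Phi a| ≤ C0 * |b - a| := by
  wlog hab : a ≤ b with H
  · have := H b a (le_of_not_ge hab)
    rw [abs_sub_comm] at this
    rwa [show |b - a| = |a - b| from abs_sub_comm b a]
  rw [abs_of_nonneg (by linarith [Phi_mono hab] : (0:ℝ) ≤ Phi b - Phi a),
    abs_of_nonneg (by linarith : (0:ℝ) ≤ b - a), Phi_sub_Phi,
    intervalIntegral.integral_of_le hab]
  calc ∫ t in Ioc a b, stdPhi t ≤ ∫ _t in Ioc a b, C0 := by
        apply setIntegral_mono_on integrable_stdPhi.integrableOn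
          (integrableOn_const measure_Ioc_lt_top.ne) measurableSet_Ioc
        intro t _; exact stdPhi_le t
    _ = C0 * (b - a) := by
        rw [setIntegral_const, smul_eq_mul, measureReal_def, Real.volume_Ioc, mul_comm,
          ENNReal.toReal_ofReal (by linarith)]

lemma Phi_continuous : Continuous Phi := by
  have : LipschitzWith (Real.toNNReal C0) Phi := by
    apply LipschitzWith.of_dist_le_mul
    intro x y
    rw [Real.dist_eq, Real.dist_eq]
    calc |Phi x - Phi y| ≤ C0 * |x - y| := Phi_lipschitz y x
      _ ≤ (Real.toNNReal C0) * |x - y| := by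
          rw [Real.coe_toNNReal _ C0_pos.le]
  exact this.continuous

lemma tendsto_Phi_atBot : Tendsto Phi atBot (nhds 0) := by
  have h : Tendsto (fun a => ∫ t in a..(0:ℝ), stdPhi t) atBot
      (nhds (∫ t in Iic (0:ℝ), stdPhi t)) :=
    intervalIntegral_tendsto_integral_Iic 0 integrable_stdPhi.integrableOn tendsto_id
  have h2 : Tendsto (fun a => Phi 0 - (Phi 0 - Phi a)) atBot (nhds (Phi 0 - Phi 0)) := by
    apply Tendsto.sub tendsto_const_nhds
    simp only [Phi_sub_Phi]
    rw [Phi_eq]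
    exact h
  simpa using h2

lemma tendsto_Phi_atTop : Tendsto Phi atTop (nhds 1) := by
  have h : Tendsto (fun b => ∫ t in (0:ℝ)..b, stdPhi t) atTop
      (nhds (∫ t in Ioi (0:ℝ), stdPhi t)) :=
    intervalIntegral_tendsto_integral_Ioi 0 integrable_stdPhi.integrableOn tendsto_id
  have h2 : Tendsto (fun b => Phi 0 + (Phi b - Phi 0)) atTop
      (nhds (Phi 0 + ∫ t in Ioi (0:ℝ), stdPhi t)) := by
    apply Tendsto.add tendsto_const_nhds
    simp only [Phi_sub_Phi]; exact h
  have h3 : Phi 0 + ∫ t in Ioi (0:ℝ), stdPhi t = 1 := by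
    rw [Phi_eq, ← integral_stdPhi]
    rw [← integral_add_compl measurableSet_Iic integrable_stdPhi, compl_Iic]
  rw [h3] at h2
  simpa using h2

lemma PhiE_coe (x : ℝ) : PhiE (x : EReal) = Phi x := by
  simp [PhiE, EReal.coe_ne_top, EReal.coe_ne_bot]

lemma PhiE_bot : PhiE ⊥ = 0 := by simp [PhiE]

lemma PhiE_top : PhiE ⊤ = 1 := by simp [PhiE]

lemma tendsto_coe_atTop_of_ereal {c : ℕ → ℝ} {ν : EReal}
    (hc : Tendsto (fun n => ((c n : ℝ) : EReal)) atTop (nhds ν)) (hν : ν = ⊤) :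
    Tendsto c atTop atTop := by
  subst hν
  rw [EReal.tendsto_nhds_top_iff_real] at hc
  rw [tendsto_atTop]
  intro b
  filter_upwards [hc b] with n hn
  exact_mod_cast (EReal.coe_lt_coe_iff.1 hn).le

lemma tendsto_coe_atBot_of_ereal {c : ℕ → ℝ} {ν : EReal}
    (hc : Tendsto (fun n => ((c n : ℝ) : EReal)) atTop (nhds ν)) (hν : ν = ⊥) :
    Tendsto c atTop atBot := by
  subst hν
  rw [EReal.tendsto_nhds_bot_iff_real] at hc
  rw [tendsto_atBot]
  intro b
  filter_upwards [hc b] with n hn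
  exact_mod_cast (EReal.coe_lt_coe_iff.1 hn).le

/-- Key pointwise limit lemma. -/
lemma tendsto_Phi_key {c : ℕ → ℝ} {ν : EReal}
    (hc : Tendsto (fun n => ((c n : ℝ) : EReal)) atTop (nhds ν))
    {x : ℕ → ℝ} {xl : ℝ} (hx : Tendsto x atTop (nhds xl)) :
    Tendsto (fun n => Phi (-(c n) + x n)) atTop (nhds (PhiE (-ν + (xl : EReal)))) := by
  induction ν with
  | bot =>
      have hcb := tendsto_coe_atBot_of_ereal hc rfl
      have h1 : PhiE (-(⊥:EReal) + (xl:EReal)) = 1 := by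
        rw [show -(⊥:EReal) + (xl:EReal) = ⊤ from by
          rw [EReal.neg_bot]; exact EReal.top_add_coe xl]
        exact PhiE_top
      rw [h1]
      have hneg : Tendsto (fun n => -(c n)) atTop atTop := tendsto_neg_atBot_atTop.comp hcb
      have harg : Tendsto (fun n => -(c n) + x n) atTop atTop :=
        tendsto_atTop_add_right_of_le' atTop (xl - 1) hneg
          (hx.eventually (eventually_ge_nhds (by linarith)))
      exact tendsto_Phi_atTop.comp harg
  | coe r =>
      rw [EReal.tendsto_coe] at hc
      have h1 : PhiE (-((r:ℝ):EReal) + (xl:EReal)) = Phi (-r + xl) := by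
        rw [show -((r:ℝ):EReal) + (xl:EReal) = (((-r + xl : ℝ)):EReal) from by
          push_cast; ring]
        exact PhiE_coe _
      rw [h1]
      exact (Phi_continuous.tendsto _).comp ((hc.neg).add hx)
  | top =>
      have hct := tendsto_coe_atTop_of_ereal hc rfl
      have h1 : PhiE (-(⊤:EReal) + (xl:EReal)) = 0 := by
        rw [show -(⊤:EReal) + (xl:EReal) = ⊥ from by
          rw [EReal.neg_top]; exact EReal.bot_add _]
        exact PhiE_bot
      rw [h1]
      have hneg : Tendsto (fun n => -(c n)) atTop atBot := tendsto_neg_atTop_atBot.comp hct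
      have harg : Tendsto (fun n => -(c n) + x n) atTop atBot :=
        tendsto_atBot_add_right_of_ge' atTop (xl + 1) hneg
          (hx.eventually (eventually_le_nhds (by linarith)))
      exact tendsto_Phi_atBot.comp harg

noncomputable def Cm (m : ℕ) : ℝ :=
  (2 : ℝ) ^ ((1 : ℝ) - (m : ℝ) / 2) * (Real.Gamma ((m : ℝ) / 2))⁻¹ * Real.sqrt m *
    (m : ℝ) ^ (((m : ℝ) - 1) / 2)

lemma rho_nonneg (m : ℕ) (hm : 1 ≤ m) (s : ℝ) : 0 ≤ rho m s := by
  have hm0 : (0:ℝ) < (m:ℝ) := by exact_mod_cast hm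
  have hΓ : 0 < Real.Gamma ((m : ℝ) / 2) := Real.Gamma_pos_of_pos (by positivity)
  unfold rho
  split_ifs
  · positivity
  · exact le_refl 0
    
lemma measurable_rho (m : ℕ) : Measurable (rho m) := by
  unfold rho
  apply Measurable.ite measurableSet_Ioi _ measurable_const
  fun_prop

lemma rho_eq_on (m : ℕ) (hm : 1 ≤ m) {s : ℝ} (hs : 0 < s) :
    rho m s = Cm m * (s ^ ((m : ℝ) - 1) * Real.exp (-((m:ℝ)/2) * s ^ 2)) := by
  have hm0 : (0:ℝ) ≤ (m:ℝ) := by positivity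
  unfold rho Cm
  rw [if_pos hs]
  have h1 : ((m : ℝ) * s ^ 2) ^ (((m : ℝ) - 1) / 2)
      = (m : ℝ) ^ (((m : ℝ) - 1) / 2) * s ^ ((m : ℝ) - 1) := by
    rw [Real.mul_rpow hm0 (by positivity)]
    congr 1
    rw [← Real.rpow_natCast s 2, ← Real.rpow_mul hs.le,
      show ((2:ℕ):ℝ) * (((m:ℝ) - 1) / 2) = (m:ℝ) - 1 from by push_cast; ring]
  have h2 : Real.exp (-(m : ℝ) * s ^ 2 / 2) = Real.exp (-((m:ℝ)/2) * s ^ 2) := by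
    congr 1; ring
  rw [h1, h2]; ring

lemma moment (m : ℕ) (hm : 1 ≤ m) (j : ℕ) :
    ∫ s in Ioi (0:ℝ), s ^ j * rho m s
      = Cm m * (((m:ℝ)/2) ^ (-(((m:ℝ) + j))/2) * (1/2) * Real.Gamma (((m:ℝ) + j)/2)) := by
  have hm0 : (0:ℝ) < (m:ℝ) := by exact_mod_cast hm
  have hq : (-1:ℝ) < (m:ℝ) - 1 + j := by
    have : (0:ℝ) ≤ (j:ℝ) := by positivity
    linarith
  calc ∫ s in Ioi (0:ℝ), s ^ j * rho m s
      = ∫ s in Ioi (0:ℝ), Cm m * (s ^ ((m:ℝ) - 1 + j) * Real.exp (-((m:ℝ)/2) * s ^ 2)) := by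
        apply setIntegral_congr_fun measurableSet_Ioi
        intro s hs
        dsimp only
        rw [rho_eq_on m hm hs, Real.rpow_add hs, Real.rpow_natCast]
        ring
    _ = Cm m * ∫ s in Ioi (0:ℝ), s ^ ((m:ℝ) - 1 + j) * Real.exp (-((m:ℝ)/2) * s ^ 2) :=
        integral_const_mul _ _
    _ = Cm m * (((m:ℝ)/2) ^ (-(((m:ℝ) - 1 + j) + 1)/2) * (1/2)
          * Real.Gamma ((((m:ℝ) - 1 + j) + 1)/2)) := by
        rw [← integral_rpow_mul_exp_neg_mul_rpow two_pos hq (by positivity : (0:ℝ) < (m:ℝ)/2)]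
        congr 1
        apply setIntegral_congr_fun measurableSet_Ioi
        intro s hs
        dsimp only
        rw [Real.rpow_two]
    _ = Cm m * (((m:ℝ)/2) ^ (-(((m:ℝ) + j))/2) * (1/2) * Real.Gamma (((m:ℝ) + j)/2)) := by
        ring_nf

lemma moment_zero (m : ℕ) (hm : 1 ≤ m) : ∫ s in Ioi (0:ℝ), rho m s = 1 := by
  have h := moment m hm 0
  simp only [pow_zero, one_mul, Nat.cast_zero, add_zero] at h
  rw [h]
  have hm0 : (0:ℝ) < (m:ℝ) := by exact_mod_cast hm
  set x := (m:ℝ) with hx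
  have hΓ : 0 < Real.Gamma (x / 2) := Real.Gamma_pos_of_pos (by positivity)
  have hsqrt : Real.sqrt x = x ^ ((1:ℝ)/2) := Real.sqrt_eq_rpow x
  have h1 : x ^ ((1:ℝ)/2) * x ^ ((x - 1)/2) = x ^ (x/2) := by
    rw [← Real.rpow_add hm0]; ring_nf
  have h2 : (x/2) ^ (-x/2 : ℝ) = x ^ (-x/2 : ℝ) * 2 ^ (x/2 : ℝ) := by
    rw [Real.div_rpow hm0.le (by norm_num : (0:ℝ) ≤ 2), neg_div,
      Real.rpow_neg (by norm_num : (0:ℝ) ≤ 2) (x/2), div_inv_eq_mul]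
  have h3 : x ^ (x/2 : ℝ) * x ^ (-x/2 : ℝ) = 1 := by
    rw [← Real.rpow_add hm0, show x/2 + -x/2 = 0 from by ring, Real.rpow_zero]
  have h4 : (2:ℝ) ^ ((1:ℝ) - x/2) * 2 ^ (x/2 : ℝ) = 2 := by
    rw [← Real.rpow_add (by norm_num : (0:ℝ) < 2), show (1:ℝ) - x/2 + x/2 = 1 from by ring,
      Real.rpow_one]
  have h5 : (Real.Gamma (x/2))⁻¹ * Real.Gamma (x/2) = 1 := inv_mul_cancel₀ hΓ.ne'
  unfold Cm
  rw [← hx, hsqrt]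
  calc (2:ℝ) ^ ((1:ℝ) - x/2) * (Real.Gamma (x/2))⁻¹ * x ^ ((1:ℝ)/2) * x ^ ((x-1)/2) *
        ((x/2) ^ (-x/2 : ℝ) * (1/2) * Real.Gamma (x/2))
      = ((2:ℝ) ^ ((1:ℝ) - x/2) * 2 ^ (x/2 : ℝ)) * ((Real.Gamma (x/2))⁻¹ * Real.Gamma (x/2)) *
        ((x ^ ((1:ℝ)/2) * x ^ ((x-1)/2)) * x ^ (-x/2 : ℝ)) * (1/2) := by rw [h2]; ring
    _ = 2 * 1 * (x ^ (x/2 : ℝ) * x ^ (-x/2 : ℝ)) * (1/2) := by rw [h4, h5, h1]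
    _ = 1 := by rw [h3]; ring

lemma moment_step (m : ℕ) (hm : 1 ≤ m) (j : ℕ) :
    ∫ s in Ioi (0:ℝ), s ^ (j+2) * rho m s
      = (((m:ℝ) + j)/m) * ∫ s in Ioi (0:ℝ), s ^ j * rho m s := by
  have hm0 : (0:ℝ) < (m:ℝ) := by exact_mod_cast hm
  have hj0 : (0:ℝ) ≤ (j:ℝ) := by positivity
  rw [moment m hm (j+2), moment m hm j]
  have hc : ((m:ℝ) + ((j:ℕ)+2:ℕ)) = ((m:ℝ) + j) + 2 := by push_cast; ring
  rw [hc]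
  have hG : Real.Gamma ((((m:ℝ) + j) + 2)/2)
      = (((m:ℝ) + j)/2) * Real.Gamma (((m:ℝ) + j)/2) := by
    rw [show (((m:ℝ) + j) + 2)/2 = ((m:ℝ) + j)/2 + 1 from by ring,
      Real.Gamma_add_one (by positivity)]
  have hR : ((m:ℝ)/2) ^ (-(((m:ℝ) + j) + 2)/2)
      = ((m:ℝ)/2) ^ (-(((m:ℝ) + j))/2) * ((m:ℝ)/2)⁻¹ := by
    rw [show -(((m:ℝ) + j) + 2)/2 = -(((m:ℝ) + j))/2 + (-1) from by ring,
      Real.rpow_add (by positivity), Real.rpow_neg_one]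
  rw [hG, hR]
  field_simp

lemma moment_two (m : ℕ) (hm : 1 ≤ m) : ∫ s in Ioi (0:ℝ), s ^ 2 * rho m s = 1 := by
  have hm0 : (0:ℝ) < (m:ℝ) := by exact_mod_cast hm
  have h := moment_step m hm 0
  simp only [pow_zero, one_mul, Nat.cast_zero, add_zero, zero_add] at h
  rw [h, moment_zero m hm, div_self hm0.ne', mul_one]

lemma moment_four (m : ℕ) (hm : 1 ≤ m) :
    ∫ s in Ioi (0:ℝ), s ^ 4 * rho m s = ((m:ℝ) + 2)/m := by
  have h := moment_step m hm 2
  norm_num at h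
  rw [h, moment_two m hm, mul_one]

lemma int_pow_rho (m : ℕ) (hm : 1 ≤ m) (j : ℕ) :
    IntegrableOn (fun s => s ^ j * rho m s) (Ioi (0:ℝ)) := by
  have hm0 : (0:ℝ) < (m:ℝ) := by exact_mod_cast hm
  have hq : (-1:ℝ) < (m:ℝ) - 1 + j := by
    have : (0:ℝ) ≤ (j:ℝ) := by positivity
    linarith
  have base := (integrableOn_rpow_mul_exp_neg_mul_sq
    (by positivity : (0:ℝ) < (m:ℝ)/2) hq).const_mul (Cm m)
  refine IntegrableOn.congr_fun base (fun s hs => ?_) measurableSet_Ioi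
  rw [rho_eq_on m hm hs, Real.rpow_add hs, Real.rpow_natCast]
  ring

lemma int_rho (m : ℕ) (hm : 1 ≤ m) : IntegrableOn (rho m) (Ioi (0:ℝ)) := by
  refine IntegrableOn.congr_fun (int_pow_rho m hm 0) (fun s _ => ?_) measurableSet_Ioi
  simp

/-- Chebyshev-type second-moment bound. -/
lemma int_cheb (m : ℕ) (hm : 1 ≤ m) :
    IntegrableOn (fun s => (s^2 - 1)^2 * rho m s) (Ioi (0:ℝ)) := by
  have h4 := int_pow_rho m hm 4
  have h2 := int_pow_rho m hm 2
  have h0 := int_pow_rho m hm 0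
  refine IntegrableOn.congr_fun ((h4.add (h2.const_mul (-2:ℝ))).add h0)
    (fun s _ => ?_) measurableSet_Ioi
  simp only [Pi.add_apply]
  ring

lemma cheb_value (m : ℕ) (hm : 1 ≤ m) :
    ∫ s in Ioi (0:ℝ), (s^2 - 1)^2 * rho m s = 2/(m:ℝ) := by
  have hm0 : (0:ℝ) < (m:ℝ) := by exact_mod_cast hm
  have h4 := int_pow_rho m hm 4
  have h2 := int_pow_rho m hm 2
  have h0 := int_pow_rho m hm 0
  have heq : ∀ s ∈ Ioi (0:ℝ), (s^2 - 1)^2 * rho m s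
      = s^4 * rho m s + (-2 : ℝ) * (s^2 * rho m s) + s^0 * rho m s := by
    intro s _; ring
  rw [show (∫ s in Ioi (0:ℝ), (s^2 - 1)^2 * rho m s)
      = ∫ s in Ioi (0:ℝ), (s^4 * rho m s + (-2:ℝ) * (s^2 * rho m s) + s^0 * rho m s) from
    setIntegral_congr_fun measurableSet_Ioi heq]
  have h42 : IntegrableOn (fun s => s^4 * rho m s + (-2:ℝ) * (s^2 * rho m s)) (Ioi (0:ℝ)) :=
    IntegrableOn.congr_fun (h4.add (h2.const_mul (-2:ℝ)))
      (fun s _ => by simp only [Pi.add_apply]) measurableSet_Ioi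
  rw [integral_add h42 h0,
    integral_add h4 (h2.const_mul (-2:ℝ)), integral_const_mul]
  rw [moment_four m hm, moment_two m hm]
  simp only [pow_zero, one_mul]
  rw [moment_zero m hm]
  field_simp
  ring

lemma tendsto_of_eventually_abs_le {f : ℕ → ℝ} {L : ℝ}
    (h : ∀ ε > (0:ℝ), ∀ᶠ n in atTop, |f n - L| ≤ ε) : Tendsto f atTop (nhds L) := by
  apply Metric.tendsto_nhds.2
  intro ε hε
  filter_upwards [h (ε/2) (by linarith)] with n hn
  rw [Real.dist_eq]
  linarith

lemma abs_Phi_sub_le (x y : ℝ) : |Phi x - Phi y| ≤ 1 := by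
  rw [abs_le]
  constructor <;> nlinarith [Phi_nonneg x, Phi_le_one x, Phi_nonneg y, Phi_le_one y]


lemma intOn_add {f g : ℝ → ℝ} (hf : IntegrableOn f (Ioi (0:ℝ)))
    (hg : IntegrableOn g (Ioi (0:ℝ))) :
    IntegrableOn (fun s => f s + g s) (Ioi (0:ℝ)) :=
  IntegrableOn.congr_fun (hf.add hg) (fun s _ => by simp only [Pi.add_apply]) measurableSet_Ioi

lemma int_one_rho (m : ℕ) (hm : 1 ≤ m) : IntegrableOn (fun s => s * rho m s) (Ioi (0:ℝ)) := by
  refine IntegrableOn.congr_fun (int_pow_rho m hm 1) (fun s _ => ?_) measurableSet_Ioi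
  simp

lemma moment_one_le (m : ℕ) (hm : 1 ≤ m) : ∫ s in Ioi (0:ℝ), s * rho m s ≤ 1 := by
  have h2 := int_pow_rho m hm 2
  have h0 := int_rho m hm
  have hmono : ∫ s in Ioi (0:ℝ), s * rho m s
      ≤ ∫ s in Ioi (0:ℝ), (1/2 : ℝ) * (rho m s + s^2 * rho m s) := by
    apply setIntegral_mono_on (int_one_rho m hm)
      ((intOn_add h0 h2).const_mul (1/2:ℝ)) measurableSet_Ioi
    intro s hs
    have := rho_nonneg m hm s
    nlinarith [sq_nonneg (s - 1)]
  calc ∫ s in Ioi (0:ℝ), s * rho m s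
      ≤ ∫ s in Ioi (0:ℝ), (1/2 : ℝ) * (rho m s + s^2 * rho m s) := hmono
    _ = (1/2 : ℝ) * ((∫ s in Ioi (0:ℝ), rho m s) + ∫ s in Ioi (0:ℝ), s^2 * rho m s) := by
        rw [integral_const_mul, integral_add h0 h2]
    _ = 1 := by rw [moment_zero m hm, moment_two m hm]; norm_num

lemma int_abs_rho (m : ℕ) (hm : 1 ≤ m) :
    IntegrableOn (fun s => |s - 1| * rho m s) (Ioi (0:ℝ)) := by
  apply Integrable.mono' (intOn_add (int_rho m hm) (int_one_rho m hm))
  · exact (((continuous_id.sub continuous_const).abs.measurable).mul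
      (measurable_rho m)).aestronglyMeasurable
  · filter_upwards [ae_restrict_mem measurableSet_Ioi] with s hs
    rw [Real.norm_eq_abs, abs_mul, abs_abs, abs_of_nonneg (rho_nonneg m hm s)]
    have h1 : |s - 1| ≤ 1 + s := by
      rw [abs_le]; constructor <;> [linarith [le_of_lt (mem_Ioi.mp hs)]; linarith [le_of_lt (mem_Ioi.mp hs)]]
    nlinarith [rho_nonneg m hm s]

lemma moment_abs_le (m : ℕ) (hm : 1 ≤ m) (t : ℝ) (ht : 0 < t) :
    ∫ s in Ioi (0:ℝ), |s - 1| * rho m s ≤ t + (2/(m:ℝ))/t := by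
  have hch := int_cheb m hm
  have h0 := int_rho m hm
  have hmono : ∫ s in Ioi (0:ℝ), |s - 1| * rho m s
      ≤ ∫ s in Ioi (0:ℝ), (t * rho m s + (1/t) * ((s^2-1)^2 * rho m s)) := by
    apply setIntegral_mono_on (int_abs_rho m hm)
      (intOn_add (h0.const_mul t) (hch.const_mul (1/t))) measurableSet_Ioi
    intro s hs
    have hρ := rho_nonneg m hm s
    have hs0 : (0:ℝ) < s := hs
    -- |s-1| ≤ t + (s^2-1)^2 / t
    have key : |s - 1| ≤ t + (s^2 - 1)^2 / t := by
      rcases le_or_gt |s - 1| t with h | h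
      · have : (0:ℝ) ≤ (s^2-1)^2 / t := by positivity
        linarith
      · have h1 : (s - 1)^2 ≤ (s^2 - 1)^2 := by nlinarith [sq_nonneg (s-1)]
        have h2 : |s - 1| * |s - 1| ≤ (s^2-1)^2 := by
          rw [← abs_mul, ← sq]
          calc |(s-1)^2| = (s-1)^2 := abs_of_nonneg (sq_nonneg _)
            _ ≤ (s^2-1)^2 := h1
        have h3 : t * |s - 1| ≤ (s^2-1)^2 := by nlinarith [abs_nonneg (s-1)]
        have : |s - 1| ≤ (s^2-1)^2 / t := by
          rw [le_div_iff₀ ht]; linarith [h3]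
        linarith
    calc |s - 1| * rho m s ≤ (t + (s^2-1)^2/t) * rho m s :=
          mul_le_mul_of_nonneg_right key hρ
      _ = t * rho m s + (1/t) * ((s^2-1)^2 * rho m s) := by field_simp
  calc ∫ s in Ioi (0:ℝ), |s - 1| * rho m s
      ≤ ∫ s in Ioi (0:ℝ), (t * rho m s + (1/t) * ((s^2-1)^2 * rho m s)) := hmono
    _ = t * (∫ s in Ioi (0:ℝ), rho m s) + (1/t) * ∫ s in Ioi (0:ℝ), (s^2-1)^2 * rho m s := by
        rw [integral_add (h0.const_mul t) (hch.const_mul (1/t)), integral_const_mul,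
          integral_const_mul]
    _ = t + (2/(m:ℝ))/t := by
        rw [moment_zero m hm, cheb_value m hm]; ring

/-- Main quantitative step: if `|g s - L| ≤ h s` pointwise on `Ioi 0` then the
`rho`-average of `g` is within `∫ h ρ` of `L`. -/
lemma abs_integral_sub_le (m : ℕ) (hm : 1 ≤ m) {g h : ℝ → ℝ} (L : ℝ)
    (hgmeas : Measurable g) (hgb : ∀ s, |g s| ≤ 1)
    (hh : IntegrableOn (fun s => h s * rho m s) (Ioi (0:ℝ)))
    (hpt : ∀ s ∈ Ioi (0:ℝ), |g s - L| ≤ h s) :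
    |(∫ s in Ioi (0:ℝ), g s * rho m s) - L| ≤ ∫ s in Ioi (0:ℝ), h s * rho m s := by
  have hgint : IntegrableOn (fun s => g s * rho m s) (Ioi (0:ℝ)) := by
    apply Integrable.mono' (int_rho m hm) (hgmeas.mul (measurable_rho m)).aestronglyMeasurable
    filter_upwards [ae_restrict_mem measurableSet_Ioi] with s hs
    rw [Real.norm_eq_abs, Pi.mul_apply, abs_mul, abs_of_nonneg (rho_nonneg m hm s)]
    exact mul_le_of_le_one_left (rho_nonneg m hm s) (hgb s)
  have hLint : IntegrableOn (fun s => L * rho m s) (Ioi (0:ℝ)) := (int_rho m hm).const_mul L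
  have hdiff : (∫ s in Ioi (0:ℝ), g s * rho m s) - L
      = ∫ s in Ioi (0:ℝ), (g s - L) * rho m s := by
    have hL : L = ∫ s in Ioi (0:ℝ), L * rho m s := by
      rw [integral_const_mul, moment_zero m hm, mul_one]
    calc (∫ s in Ioi (0:ℝ), g s * rho m s) - L
        = (∫ s in Ioi (0:ℝ), g s * rho m s) - ∫ s in Ioi (0:ℝ), L * rho m s := by rw [← hL]
      _ = ∫ s in Ioi (0:ℝ), (g s * rho m s - L * rho m s) := (integral_sub hgint hLint).symm
      _ = ∫ s in Ioi (0:ℝ), (g s - L) * rho m s := by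
          congr 1; funext s; ring
  rw [hdiff]
  have habs : IntegrableOn (fun s => |(g s - L) * rho m s|) (Ioi (0:ℝ)) := by
    have h1 : IntegrableOn (fun s => |g s * rho m s - L * rho m s|) (Ioi (0:ℝ)) :=
      (hgint.sub hLint).abs
    refine IntegrableOn.congr_fun h1 (fun s _ => ?_) measurableSet_Ioi
    congr 1; ring
  calc |∫ s in Ioi (0:ℝ), (g s - L) * rho m s|
      ≤ ∫ s in Ioi (0:ℝ), |(g s - L) * rho m s| := by
        rw [show |∫ s in Ioi (0:ℝ), (g s - L) * rho m s|
            = ‖∫ s in Ioi (0:ℝ), (g s - L) * rho m s‖ from (Real.norm_eq_abs _).symm]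
        refine le_trans (norm_integral_le_integral_norm _) ?_
        simp only [Real.norm_eq_abs]
        exact le_refl _
    _ ≤ ∫ s in Ioi (0:ℝ), h s * rho m s := by
        apply setIntegral_mono_on habs hh measurableSet_Ioi
        intro s hs
        rw [abs_mul, abs_of_nonneg (rho_nonneg m hm s)]
        exact mul_le_mul_of_nonneg_right (hpt s hs) (rho_nonneg m hm s)

lemma meas_g (A B : ℝ) : Measurable (fun s => Phi (A + s * B) - Phi (A - s * B)) := by
  apply Measurable.sub
  · exact (Phi_continuous.comp (by continuity)).measurable
  · exact (Phi_continuous.comp (by continuity)).measurable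

/-- Bound for the infinite-`ν` cases. -/
lemma a2_inf_bound (m : ℕ) (hm : 1 ≤ m) (A B u : ℝ) (hu : 0 ≤ u)
    (hnear : ∀ s : ℝ, 0 < s → s ≤ 2 → |Phi (A + s * B) - Phi (A - s * B)| ≤ u) :
    |∫ s in Ioi (0:ℝ), (Phi (A + s * B) - Phi (A - s * B)) * rho m s|
      ≤ u + (2/9) * (2/(m:ℝ)) := by
  have hint : IntegrableOn (fun s => (u + (2/9) * (s^2-1)^2) * rho m s) (Ioi (0:ℝ)) := by
    refine IntegrableOn.congr_fun
      (intOn_add ((int_rho m hm).const_mul u) ((int_cheb m hm).const_mul (2/9)))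
      (fun s _ => by ring) measurableSet_Ioi
  have happ := abs_integral_sub_le m hm (g := fun s => Phi (A + s * B) - Phi (A - s * B))
    (h := fun s => u + (2/9) * (s^2-1)^2) 0 (meas_g A B) (fun s => abs_Phi_sub_le _ _)
    hint ?_
  · rw [sub_zero] at happ
    refine le_trans happ (le_of_eq ?_)
    rw [show (∫ s in Ioi (0:ℝ), (u + (2/9) * (s^2-1)^2) * rho m s)
        = ∫ s in Ioi (0:ℝ), (u * rho m s + (2/9) * ((s^2-1)^2 * rho m s)) from
      setIntegral_congr_fun measurableSet_Ioi (fun s _ => by ring)]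
    rw [integral_add ((int_rho m hm).const_mul u) ((int_cheb m hm).const_mul (2/9)),
      integral_const_mul, integral_const_mul, moment_zero m hm, cheb_value m hm, mul_one]
  · intro s hs
    have hs0 : (0:ℝ) < s := hs
    rw [sub_zero]
    rcases le_or_gt s 2 with h2 | h2
    · have : (0:ℝ) ≤ (2/9) * (s^2-1)^2 := by positivity
      linarith [hnear s hs0 h2]
    · have h1 : |Phi (A + s * B) - Phi (A - s * B)| ≤ 1 := abs_Phi_sub_le _ _
      have h4 : (3:ℝ) ≤ s^2 - 1 := by nlinarith
      have h3 : (1:ℝ) ≤ (2/9) * (s^2-1)^2 := by nlinarith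
      linarith

/-- Bound for the finite-`ν` case. -/
lemma a2_real_bound (m : ℕ) (hm : 1 ≤ m) (A B a e t : ℝ) (he : 0 ≤ e) (ht : 0 < t) :
    |(∫ s in Ioi (0:ℝ), (Phi (A + s * B) - Phi (A - s * B)) * rho m s)
        - (Phi (a + e) - Phi (a - e))|
      ≤ 2*C0*(|A - a| + |B - e|) + 2*C0*e*(t + (2/(m:ℝ))/t) := by
  have hint : IntegrableOn
      (fun s => 2*C0*(|A - a| + s*|B - e| + e*|s-1|) * rho m s) (Ioi (0:ℝ)) := by
    refine IntegrableOn.congr_fun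
      (intOn_add (intOn_add ((int_rho m hm).const_mul (2*C0*|A - a|))
        ((int_one_rho m hm).const_mul (2*C0*|B - e|)))
        ((int_abs_rho m hm).const_mul (2*C0*e)))
      (fun s _ => by ring) measurableSet_Ioi
  have happ := abs_integral_sub_le m hm (g := fun s => Phi (A + s * B) - Phi (A - s * B))
    (h := fun s => 2*C0*(|A - a| + s*|B - e| + e*|s-1|)) (Phi (a + e) - Phi (a - e))
    (meas_g A B) (fun s => abs_Phi_sub_le _ _) hint ?_
  · refine le_trans happ ?_
    rw [show (∫ s in Ioi (0:ℝ), 2*C0*(|A - a| + s*|B - e| + e*|s-1|) * rho m s)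
        = ∫ s in Ioi (0:ℝ), ((2*C0*|A - a|) * rho m s + (2*C0*|B - e|) * (s * rho m s)
            + (2*C0*e) * (|s-1| * rho m s)) from
      setIntegral_congr_fun measurableSet_Ioi (fun s _ => by ring)]
    rw [integral_add (intOn_add ((int_rho m hm).const_mul (2*C0*|A - a|))
        (((int_one_rho m hm).const_mul (2*C0*|B - e|))))
        ((int_abs_rho m hm).const_mul (2*C0*e)),
      integral_add ((int_rho m hm).const_mul (2*C0*|A - a|))
        ((int_one_rho m hm).const_mul (2*C0*|B - e|)),
      integral_const_mul, integral_const_mul, integral_const_mul, moment_zero m hm, mul_one]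
    have hC0 : (0:ℝ) < C0 := C0_pos
    have hM1 : ∫ s in Ioi (0:ℝ), s * rho m s ≤ 1 := moment_one_le m hm
    have hM1' : (0:ℝ) ≤ ∫ s in Ioi (0:ℝ), s * rho m s :=
      setIntegral_nonneg measurableSet_Ioi
        (fun s hs => mul_nonneg (le_of_lt hs) (rho_nonneg m hm s))
    have hMabs : ∫ s in Ioi (0:ℝ), |s-1| * rho m s ≤ t + (2/(m:ℝ))/t := moment_abs_le m hm t ht
    have h1 : 2*C0*|B - e| * ∫ s in Ioi (0:ℝ), s * rho m s ≤ 2*C0*|B - e| := by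
      have := mul_le_mul_of_nonneg_left hM1 (show (0:ℝ) ≤ 2*C0*|B - e| by positivity)
      simpa using this
    have h2 : 2*C0*e * ∫ s in Ioi (0:ℝ), |s-1| * rho m s ≤ 2*C0*e*(t + (2/(m:ℝ))/t) := by
      apply mul_le_mul_of_nonneg_left hMabs
      positivity
    linarith
  · intro s hs
    have hs0 : (0:ℝ) < s := hs
    have hB1 : |s*B - e| ≤ s*|B - e| + e*|s-1| := by
      calc |s*B - e| = |s*(B - e) + e*(s - 1)| := by ring_nf
        _ ≤ |s*(B - e)| + |e*(s - 1)| := abs_add_le _ _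
        _ = s*|B - e| + e*|s-1| := by
            rw [abs_mul, abs_mul, abs_of_nonneg hs0.le, abs_of_nonneg he]
    have k1 : |Phi (A + s*B) - Phi (a + e)| ≤ C0*(|A - a| + (s*|B - e| + e*|s-1|)) := by
      calc |Phi (A + s*B) - Phi (a + e)| ≤ C0 * |(A + s*B) - (a + e)| := Phi_lipschitz _ _
        _ ≤ C0*(|A - a| + (s*|B - e| + e*|s-1|)) := by
            have : |(A + s*B) - (a + e)| ≤ |A - a| + |s*B - e| := by
              calc |(A + s*B) - (a + e)| = |(A - a) + (s*B - e)| := by ring_nf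
                _ ≤ |A - a| + |s*B - e| := abs_add_le _ _
            nlinarith [C0_pos, abs_nonneg ((A + s*B) - (a + e))]
    have k2 : |Phi (A - s*B) - Phi (a - e)| ≤ C0*(|A - a| + (s*|B - e| + e*|s-1|)) := by
      calc |Phi (A - s*B) - Phi (a - e)| ≤ C0 * |(A - s*B) - (a - e)| := Phi_lipschitz _ _
        _ ≤ C0*(|A - a| + (s*|B - e| + e*|s-1|)) := by
            have h' : |(A - s*B) - (a - e)| ≤ |A - a| + |s*B - e| := by
              calc |(A - s*B) - (a - e)| = |(A - a) - (s*B - e)| := by ring_nf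
                _ ≤ |A - a| + |s*B - e| := abs_sub _ _
            nlinarith [C0_pos, abs_nonneg ((A - s*B) - (a - e))]
    calc |(Phi (A + s*B) - Phi (A - s*B)) - (Phi (a + e) - Phi (a - e))|
        = |(Phi (A + s*B) - Phi (a + e)) - (Phi (A - s*B) - Phi (a - e))| := by ring_nf
      _ ≤ |Phi (A + s*B) - Phi (a + e)| + |Phi (A - s*B) - Phi (a - e)| := abs_sub _ _
      _ ≤ 2*C0*(|A - a| + s*|B - e| + e*|s-1|) := by linarith


set_option maxHeartbeats 1600000 in
/-- conservative tuning, unknown-variance moving-parameter limits of the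
deletion probability. -/
theorem stmt_4 (ξ η : ℕ → ℝ) (hξ : ∀ n, 0 < ξ n) (hη : ∀ n, 0 < η n)
    (hxe : Tendsto (fun n : ℕ => ξ n * η n) atTop (nhds 0))
    (e : ℝ) (he : 0 ≤ e)
    (hne : Tendsto (fun n : ℕ => Real.sqrt n * η n) atTop (nhds e))
    (k : ℕ → ℕ) (hk : ∀ n, 2 ≤ n → 1 ≤ k n ∧ k n < n)
    (θ σ : ℕ → ℝ) (hσ : ∀ n, 0 < σ n)
    (ν : EReal)
    (hν : Tendsto (fun n : ℕ => ((Real.sqrt n * θ n / (σ n * ξ n) : ℝ) : EReal))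
      atTop (nhds ν)) :
    (∀ m : ℕ, (∀ᶠ n in atTop, n - k n = m) →
        Tendsto (fun n : ℕ => ptdel n (n - k n) (ξ n) (η n) (θ n) (σ n)) atTop
          (nhds (∫ s in Ioi (0 : ℝ),
            (PhiE (-ν + ((s * e : ℝ) : EReal)) - PhiE (-ν - ((s * e : ℝ) : EReal)))
              * rho m s))) ∧
    (Tendsto (fun n : ℕ => n - k n) atTop atTop →
        Tendsto (fun n : ℕ => ptdel n (n - k n) (ξ n) (η n) (θ n) (σ n)) atTop
          (nhds (PhiE (-ν + (e : EReal)) - PhiE (-ν - (e : EReal))))) := by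
  set c : ℕ → ℝ := fun n => Real.sqrt n * θ n / (σ n * ξ n) with hc
  set b : ℕ → ℝ := fun n => Real.sqrt n * η n with hb
  have ptdel_eq : ∀ (n m' : ℕ), ptdel n m' (ξ n) (η n) (θ n) (σ n)
      = ∫ s in Ioi (0:ℝ), (Phi (-(c n) + s * b n) - Phi (-(c n) - s * b n)) * rho m' s := by
    intro n m'
    unfold ptdel
    congr 1
    funext s
    have h1 : Real.sqrt n * (-θ n / (σ n * ξ n) + s * η n) = -(c n) + s * b n := by
      simp only [hc, hb]; ring
    have h2 : Real.sqrt n * (-θ n / (σ n * ξ n) - s * η n) = -(c n) - s * b n := by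
      simp only [hc, hb]; ring
    rw [h1, h2]
  -- pointwise limit of the Phi difference
  have hlim : ∀ s : ℝ, 0 ≤ s → Tendsto (fun n => Phi (-(c n) + s * b n) - Phi (-(c n) - s * b n))
      atTop (nhds (PhiE (-ν + ((s * e : ℝ) : EReal)) - PhiE (-ν - ((s * e : ℝ) : EReal)))) := by
    intro s _
    have hx1 : Tendsto (fun n => s * b n) atTop (nhds (s * e)) := hne.const_mul s
    have t1 := tendsto_Phi_key hν hx1
    have t2 := tendsto_Phi_key hν hx1.neg
    have hrw : PhiE (-ν + ((-(s * e) : ℝ) : EReal)) = PhiE (-ν - ((s * e : ℝ) : EReal)) := by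
      rw [EReal.coe_neg, sub_eq_add_neg]
    rw [hrw] at t2
    have t2' : Tendsto (fun n => Phi (-(c n) - s * b n)) atTop
        (nhds (PhiE (-ν - ((s * e : ℝ) : EReal)))) := by
      refine t2.congr (fun n => ?_)
      rw [sub_eq_add_neg]
    exact t1.sub t2'
  constructor
  · -- part (a1)
    intro m hm
    have hm1 : 1 ≤ m := by
      obtain ⟨n, hn2, hnm⟩ := ((eventually_ge_atTop 2).and hm).exists
      have := hk n hn2
      omega
    have key : Tendsto (fun n => ∫ s in Ioi (0:ℝ),
        (Phi (-(c n) + s * b n) - Phi (-(c n) - s * b n)) * rho m s) atTop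
        (nhds (∫ s in Ioi (0:ℝ),
          (PhiE (-ν + ((s * e : ℝ) : EReal)) - PhiE (-ν - ((s * e : ℝ) : EReal)))
            * rho m s)) := by
      apply MeasureTheory.tendsto_integral_of_dominated_convergence (rho m)
      · intro n
        apply Measurable.aestronglyMeasurable
        apply Measurable.mul _ (measurable_rho m)
        apply Measurable.sub
        · exact (Phi_continuous.comp (by continuity)).measurable
        · exact (Phi_continuous.comp (by continuity)).measurable
      · exact int_rho m hm1
      · intro n
        filter_upwards [ae_restrict_mem measurableSet_Ioi] with s hs
        rw [norm_mul, Real.norm_eq_abs, Real.norm_eq_abs,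
          abs_of_nonneg (rho_nonneg m hm1 s)]
        exact mul_le_of_le_one_left (rho_nonneg m hm1 s) (abs_Phi_sub_le _ _)
      · filter_upwards [ae_restrict_mem measurableSet_Ioi] with s hs
        exact (hlim s (le_of_lt hs)).mul_const _
    apply key.congr' ?_
    filter_upwards [hm] with n hnm
    rw [ptdel_eq n (n - k n), hnm]
  · -- part (a2)
    intro hmk
    have hb0 : ∀ n, 0 ≤ b n := fun n => mul_nonneg (Real.sqrt_nonneg _) (hη n).le
    have hbe : ∀ᶠ n in atTop, b n ≤ e + 1 :=
      hne.eventually (eventually_le_nhds (by linarith : e < e + 1))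
    have hm1 : ∀ᶠ n in atTop, 1 ≤ n - k n := hmk.eventually (eventually_ge_atTop 1)
    have hmR : Tendsto (fun n => ((n - k n : ℕ):ℝ)) atTop atTop :=
      tendsto_natCast_atTop_atTop.comp hmk
    have hminv : Tendsto (fun n => (2:ℝ)/((n - k n : ℕ):ℝ)) atTop (nhds 0) := by
      have := (hmR.inv_tendsto_atTop).const_mul (2:ℝ)
      simpa [div_eq_mul_inv] using this
    clear hlim
    revert hν
    induction ν with
    | bot =>
        intro hν
        have hct : Tendsto c atTop atBot := tendsto_coe_atBot_of_ereal hν rfl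
        have hL1 : PhiE (-(⊥:EReal) + (e:EReal)) = 1 := by
          rw [EReal.neg_bot, EReal.top_add_coe]; exact PhiE_top
        have hL2 : PhiE (-(⊥:EReal) - (e:EReal)) = 1 := by
          rw [EReal.neg_bot, EReal.top_sub_coe]; exact PhiE_top
        rw [hL1, hL2, sub_self]
        apply tendsto_of_eventually_abs_le
        intro ε hε
        have hu : Tendsto (fun n => 1 - Phi (-(c n) - 2*(e+1))) atTop (nhds 0) := by
          have harg : Tendsto (fun n => -(c n) - 2*(e+1)) atTop atTop :=
            tendsto_atTop_add_const_right _ _ (tendsto_neg_atBot_atTop.comp hct)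
          have h' := tendsto_Phi_atTop.comp harg
          have := (tendsto_const_nhds (x := (1:ℝ)) (f := atTop)).sub h'
          simpa using this
        have hsum : Tendsto (fun n => (1 - Phi (-(c n) - 2*(e+1)))
            + (2/9) * ((2:ℝ)/((n - k n : ℕ):ℝ))) atTop (nhds 0) := by
          have := hu.add (hminv.const_mul (2/9))
          simpa using this
        filter_upwards [hbe, hm1, hsum.eventually (eventually_le_nhds hε)] with n hbn hmn hbig
        rw [sub_zero, ptdel_eq n (n - k n)]
        have hnear : ∀ s : ℝ, 0 < s → s ≤ 2 →
            |Phi (-(c n) + s * b n) - Phi (-(c n) - s * b n)|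
              ≤ 1 - Phi (-(c n) - 2*(e+1)) := by
          intro s hs0 hs2
          have hsb0 : 0 ≤ s * b n := mul_nonneg hs0.le (hb0 n)
          have hsb2 : s * b n ≤ 2*(e+1) :=
            mul_le_mul hs2 hbn (hb0 n) (by norm_num)
          have hmono := Phi_mono (show -(c n) - s * b n ≤ -(c n) + s * b n by linarith)
          rw [abs_of_nonneg (by linarith : (0:ℝ) ≤ _)]
          have := Phi_mono (show -(c n) - 2*(e+1) ≤ -(c n) - s * b n by linarith)
          linarith [Phi_le_one (-(c n) + s * b n)]
        have happ := a2_inf_bound (n - k n) hmn (-(c n)) (b n)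
          (1 - Phi (-(c n) - 2*(e+1))) (by linarith [Phi_le_one (-(c n) - 2*(e+1))]) hnear
        linarith
    | coe r =>
        intro hν
        have hcr : Tendsto c atTop (nhds r) := EReal.tendsto_coe.1 hν
        have hL1 : PhiE (-((r:ℝ):EReal) + (e:EReal)) = Phi (-r + e) := by
          rw [show -((r:ℝ):EReal) + (e:EReal) = (((-r + e : ℝ)):EReal) from by
            push_cast; ring, PhiE_coe]
        have hL2 : PhiE (-((r:ℝ):EReal) - (e:EReal)) = Phi (-r - e) := by
          rw [show -((r:ℝ):EReal) - (e:EReal) = (((-r - e : ℝ)):EReal) from by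
            push_cast; ring, PhiE_coe]
        rw [hL1, hL2]
        apply tendsto_of_eventually_abs_le
        intro ε hε
        have hC0 := C0_pos
        set t : ℝ := ε/(8*C0*(e+1)) with htdef
        have ht : 0 < t := by positivity
        have het : 2*C0*e*t ≤ ε/4 := by
          have heq : 2*C0*e*t = ε/4 * (e/(e+1)) := by
            rw [htdef]; field_simp; ring
          have hle : e/(e+1) ≤ 1 := by
            rw [div_le_one (by linarith)]; linarith
          have h0 : (0:ℝ) ≤ e/(e+1) := by positivity
          nlinarith
        have h1 : Tendsto (fun n => 2*C0*(|c n - r| + |b n - e|)) atTop (nhds 0) := by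
          have := (((hcr.sub (tendsto_const_nhds (x := r))).abs).add
            ((hne.sub (tendsto_const_nhds (x := e))).abs)).const_mul (2*C0)
          simpa using this
        have h2 : Tendsto (fun n => 2*C0*e*((2/((n - k n : ℕ):ℝ))/t)) atTop (nhds 0) := by
          have := (hminv.div_const t).const_mul (2*C0*e)
          simpa using this
        filter_upwards [hm1,
          h1.eventually (eventually_le_nhds (by linarith : (0:ℝ) < ε/4)),
          h2.eventually (eventually_le_nhds (by linarith : (0:ℝ) < ε/4))] with n hmn hn1 hn2
        rw [ptdel_eq n (n - k n)]
        have happ := a2_real_bound (n - k n) hmn (-(c n)) (b n) (-r) e t he ht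
        have habs : |-(c n) - (-r)| = |c n - r| := by
          rw [show -(c n) - (-r) = -(c n - r) from by ring, abs_neg]
        rw [habs] at happ
        have hexp : 2*C0*e*(t + (2/((n - k n : ℕ):ℝ))/t)
            = 2*C0*e*t + 2*C0*e*((2/((n - k n : ℕ):ℝ))/t) := by ring
        rw [hexp] at happ
        linarith
    | top =>
        intro hν
        have hct : Tendsto c atTop atTop := tendsto_coe_atTop_of_ereal hν rfl
        have hL1 : PhiE (-(⊤:EReal) + (e:EReal)) = 0 := by
          rw [EReal.neg_top, EReal.bot_add]; exact PhiE_bot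
        have hL2 : PhiE (-(⊤:EReal) - (e:EReal)) = 0 := by
          rw [EReal.neg_top, EReal.bot_sub]; exact PhiE_bot
        rw [hL1, hL2, sub_self]
        apply tendsto_of_eventually_abs_le
        intro ε hε
        have hu : Tendsto (fun n => Phi (-(c n) + 2*(e+1))) atTop (nhds 0) := by
          have harg : Tendsto (fun n => -(c n) + 2*(e+1)) atTop atBot :=
            tendsto_atBot_add_const_right _ _ (tendsto_neg_atTop_atBot.comp hct)
          exact tendsto_Phi_atBot.comp harg
        have hsum : Tendsto (fun n => Phi (-(c n) + 2*(e+1))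
            + (2/9) * ((2:ℝ)/((n - k n : ℕ):ℝ))) atTop (nhds 0) := by
          have := hu.add (hminv.const_mul (2/9))
          simpa using this
        filter_upwards [hbe, hm1, hsum.eventually (eventually_le_nhds hε)] with n hbn hmn hbig
        rw [sub_zero, ptdel_eq n (n - k n)]
        have hnear : ∀ s : ℝ, 0 < s → s ≤ 2 →
            |Phi (-(c n) + s * b n) - Phi (-(c n) - s * b n)|
              ≤ Phi (-(c n) + 2*(e+1)) := by
          intro s hs0 hs2
          have hsb0 : 0 ≤ s * b n := mul_nonneg hs0.le (hb0 n)
          have hsb2 : s * b n ≤ 2*(e+1) :=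
            mul_le_mul hs2 hbn (hb0 n) (by norm_num)
          have hmono := Phi_mono (show -(c n) - s * b n ≤ -(c n) + s * b n by linarith)
          rw [abs_of_nonneg (by linarith : (0:ℝ) ≤ _)]
          have := Phi_mono (show -(c n) + s * b n ≤ -(c n) + 2*(e+1) by linarith)
          linarith [Phi_nonneg (-(c n) - s * b n)]
        have happ := a2_inf_bound (n - k n) hmn (-(c n)) (b n)
          (Phi (-(c n) + 2*(e+1))) (Phi_nonneg _) hnear
        linarith
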